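/- Saddle-point block eigenvalue result (Murphy–Golub–Wathen): let A ∈ ℝ^{n×n} be symmetric positive definite, B ∈ ℝ^{m×n} of full row rank, S = B A⁻¹ Bᵀ the (negative) Schur complement, and 𝔸 = [[A, Bᵀ],[B, 0]], 𝔹 = diag(A, S)⁻¹. Then the spectrum of 𝔹𝔸 is contained in {1, (1+√5)/2, (1−√5)/2}. -/

import Mathlib

open Matrix

/-- Auxiliary: if `Y * X = 1` then `T = fromBlocks 1 X Y 0` satisfies `T³ + 1 = 2T²`. -/
lemma mgw_block_cube {n m : ℕ} (X : Matrix (Fin n) (Fin m) ℝ) (Y : Matrix (Fin m) (Fin n) ℝ)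
    (hYX : Y * X = 1) :
    (Matrix.fromBlocks (1 : Matrix (Fin n) (Fin n) ℝ) X Y 0) *
      (Matrix.fromBlocks 1 X Y 0) * (Matrix.fromBlocks 1 X Y 0) + 1 =
    (Matrix.fromBlocks (1 : Matrix (Fin n) (Fin n) ℝ) X Y 0) * (Matrix.fromBlocks 1 X Y 0) +
      (Matrix.fromBlocks (1 : Matrix (Fin n) (Fin n) ℝ) X Y 0) * (Matrix.fromBlocks 1 X Y 0) := by
  have h2 : (Matrix.fromBlocks (1 : Matrix (Fin n) (Fin n) ℝ) X Y 0) *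
      (Matrix.fromBlocks 1 X Y 0) = Matrix.fromBlocks (1 + X * Y) X Y 1 := by
    rw [Matrix.fromBlocks_multiply]
    simp [hYX]
  rw [h2, Matrix.fromBlocks_multiply, ← Matrix.fromBlocks_one, Matrix.fromBlocks_add,
    Matrix.fromBlocks_add]
  refine Matrix.fromBlocks_inj.mpr ⟨?_, ?_, ?_, ?_⟩
  · rw [Matrix.mul_one]; abel
  · rw [Matrix.add_mul, Matrix.one_mul, Matrix.mul_assoc, hYX]
    simp
  · simp
  · simp [hYX]
/-- Murphy–Golub–Wathen: for `A` SPD, `B` of full row rank,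
`S = B A⁻¹ Bᵀ`, the block-diagonally preconditioned saddle point matrix
`𝔹 𝔸 = diag(A, S)⁻¹ [[A, Bᵀ],[B, 0]]` has spectrum contained in
`{1, (1+√5)/2, (1−√5)/2}`. -/
theorem murphy_golub_wathen_three_eigenvalues
    (n m : ℕ) (A : Matrix (Fin n) (Fin n) ℝ) (B : Matrix (Fin m) (Fin n) ℝ)
    (hA : A.PosDef) (hB : B.rank = m)
    (S : Matrix (Fin m) (Fin m) ℝ) (hS : S = B * A⁻¹ * Bᵀ)
    (𝔸 𝔹 : Matrix (Fin n ⊕ Fin m) (Fin n ⊕ Fin m) ℝ)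
    (h𝔸 : 𝔸 = Matrix.fromBlocks A Bᵀ B 0)
    (h𝔹 : 𝔹 = Matrix.fromBlocks A⁻¹ 0 0 S⁻¹) :
    spectrum ℝ (𝔹 * 𝔸) ⊆
      ({1, (1 + Real.sqrt 5) / 2, (1 - Real.sqrt 5) / 2} : Set ℝ) := by
  -- invertibility of A
  have hAdet : IsUnit A.det := hA.det_pos.ne'.isUnit
  have hAinv : A⁻¹ * A = 1 := Matrix.nonsing_inv_mul A hAdet
  -- injectivity of `Bᵀ *ᵥ ·` from full row rank
  have hBtrank : Bᵀ.rank = m := by rw [Matrix.rank_transpose]; exact hB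
  have hBt : Function.Injective (Bᵀ.mulVec) := by
    have hrn := (Bᵀ.mulVecLin).finrank_range_add_finrank_ker
    have hfr : Module.finrank ℝ (Fin m → ℝ) = m := by simp
    have hrg : Module.finrank ℝ (LinearMap.range Bᵀ.mulVecLin) = m := hBtrank
    rw [hfr, hrg] at hrn
    have hker : LinearMap.ker Bᵀ.mulVecLin = ⊥ := by
      rw [← Submodule.finrank_eq_zero (R := ℝ)]
      omega
    have hinj := LinearMap.ker_eq_bot.mp hker
    intro x y h
    exact hinj (show Bᵀ.mulVecLin x = Bᵀ.mulVecLin y by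
      simpa only [Matrix.mulVecLin_apply] using h)
  -- S is invertible
  have hSkey : ∀ x : Fin m → ℝ, S *ᵥ x = 0 → x = 0 := by
    intro x hx
    by_contra hxne
    have hBx : Bᵀ *ᵥ x ≠ 0 := by
      intro h0
      exact hxne (hBt (by simp [h0]))
    have hpos := (hA.inv).dotProduct_mulVec_pos hBx
    have hval : dotProduct (star x) (S *ᵥ x)
        = dotProduct (star (Bᵀ *ᵥ x)) (A⁻¹ *ᵥ (Bᵀ *ᵥ x)) := by
      rw [hS]
      simp only [star_trivial, ← Matrix.mulVec_mulVec]
      rw [Matrix.dotProduct_mulVec x B, ← Matrix.mulVec_transpose]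
    rw [hx] at hval
    simp only [dotProduct_zero] at hval
    rw [← hval] at hpos
    exact lt_irrefl 0 hpos
  have hSinj : Function.Injective (S.mulVec) := by
    intro x y hxy
    have := hSkey (x - y) (by rw [Matrix.mulVec_sub, hxy, sub_self])
    exact sub_eq_zero.mp this
  have hSu : IsUnit S := Matrix.mulVec_injective_iff_isUnit.mp hSinj
  have hSinv : S⁻¹ * S = 1 :=
    Matrix.nonsing_inv_mul S ((Matrix.isUnit_iff_isUnit_det S).mp hSu)
  -- the preconditioned matrix in block form
  set X := A⁻¹ * Bᵀ with hX
  set Y := S⁻¹ * B with hY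
  have hYX : Y * X = 1 := by
    rw [hY, hX, Matrix.mul_assoc, ← Matrix.mul_assoc B, ← hS, hSinv]
  set T := Matrix.fromBlocks (1 : Matrix (Fin n) (Fin n) ℝ) X Y 0 with hTdef
  have hT : 𝔹 * 𝔸 = T := by
    rw [h𝔸, h𝔹, Matrix.fromBlocks_multiply]
    simp [hAinv, hX, hY]
    rfl
  have hkey : T * T * T + 1 = T * T + T * T := mgw_block_cube X Y hYX
  -- polynomial p = X³ - 2X² + 1 kills T
  set p : Polynomial ℝ := Polynomial.X ^ 3 - Polynomial.C 2 * Polynomial.X ^ 2 + 1 with hp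
  have haeval : Polynomial.aeval T p = 0 := by
    simp only [hp, map_add, map_sub, _root_.map_mul, map_pow, _root_.map_one, map_ofNat,
      Polynomial.aeval_X, Polynomial.aeval_C]
    have h3 : T ^ 3 = T * T * T := by rw [pow_succ, pow_succ, pow_one]
    have h2 : T ^ 2 = T * T := sq T
    rw [h3, h2, two_mul, ← hkey]
    abel
  intro lam hlam
  rw [hT] at hlam
  have hmem : p.eval lam ∈ spectrum ℝ (Polynomial.aeval T p) :=
    spectrum.subset_polynomial_aeval T p ⟨lam, hlam, rfl⟩
  rw [haeval] at hmem
  have hev : p.eval lam = 0 := by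
    by_contra hne
    rw [spectrum.mem_iff] at hmem
    apply hmem
    rw [sub_zero]
    exact (IsUnit.map (algebraMap ℝ _) (Ne.isUnit hne))
  have hs5 : Real.sqrt 5 ^ 2 = 5 := Real.sq_sqrt (by norm_num)
  have hfac : (lam - 1) * ((lam - (1 + Real.sqrt 5) / 2) * (lam - (1 - Real.sqrt 5) / 2)) = 0 := by
    have hev' : lam ^ 3 - 2 * lam ^ 2 + 1 = 0 := by
      simpa [hp] using hev
    linear_combination hev' - ((lam - 1) / 4) * hs5
  simp only [Set.mem_insert_iff, Set.mem_singleton_iff]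
  rcases mul_eq_zero.mp hfac with h | h
  · left; linarith [sub_eq_zero.mp h]
  · rcases mul_eq_zero.mp h with h' | h'
    · right; left; linarith [sub_eq_zero.mp h']
    · right; right; linarith [sub_eq_zero.mp h']
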